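/- Let $\tau = (t,\dots,t)$ ($l$ copies of $t$) be a rectangular partition contained in a partition $\lambda$ (meaning $\lambda$ has at least $l$ parts each $\geq t$). Let $M_\lambda(y_1,\dots,y_m)$ be the monomial symmetric polynomial. Then $\partial_1^t\partial_2^t\cdots\partial_l^t\, M_\lambda(y) = \sum_{(\kappa,\nu)} \frac{\kappa!}{(\kappa-\tau)!}\, M_{\kappa-\tau}(y_1,\dots,y_l)\, M_\nu(y_{l+1},\dots,y_m)$, where the sum is over pairs of partitions $(\kappa,\nu)$ whose concatenation-and-sort equals $\lambda$, with $\kappa$ having at most $l$ parts each $\geq t$; here $\gamma! = \prod_i \gamma_i!$ and $\kappa - \tau = (\kappa_1 - t,\dots,\kappa_l - t)$. -/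

import Mathlib

/-- The monomial symmetric polynomial `M_λ` in `m` variables, as a function:
the sum of `y^α` over the distinct permutations `α` of the partition `λ`
(given as a multiset of parts) padded with zeros to length `m`. -/
noncomputable def msymm (m : ℕ) (lam : Multiset ℕ) (y : Fin m → ℝ) : ℝ :=
  ∑ α ∈ Finset.image
      (fun σ : Equiv.Perm (Fin m) => fun i : Fin m =>
        (lam.toList ++ List.replicate (m - Multiset.card lam) 0).getD (σ i : ℕ) 0)
      Finset.univ,
    ∏ i, y i ^ α i

/-- The partial derivative in the `i`-th coordinate of a function of `m` real variables. -/
noncomputable def pd {m : ℕ} (i : Fin m) (f : (Fin m → ℝ) → ℝ) : (Fin m → ℝ) → ℝ :=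
  fun y => deriv (fun s => f (Function.update y i s)) (y i)

open List

lemma perm_exists_fin_equiv {α : Type*} {l₁ l₂ : List α} (h : l₁.Perm l₂) :
    ∃ σ : Fin l₁.length ≃ Fin l₂.length, ∀ i, l₁.get i = l₂.get (σ i) := by
  induction h with
  | nil => exact ⟨Equiv.refl _, fun i => i.elim0⟩
  | cons x h ih =>
      obtain ⟨σ, hσ⟩ := ih
      refine ⟨(finSuccEquiv _).trans (σ.optionCongr.trans (finSuccEquiv _).symm), fun i => ?_⟩
      induction i using Fin.cases with
      | zero => simp
      | succ j => simpa using hσ j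
  | swap x y l =>
      refine ⟨Equiv.swap ⟨0, by simp⟩ ⟨1, by simp⟩, fun i => ?_⟩
      rcases i with ⟨(_|_|k), hk⟩ <;>
        simp [Equiv.swap_apply_def, Fin.ext_iff]
  | trans h₁ h₂ ih₁ ih₂ =>
      obtain ⟨σ₁, h₁'⟩ := ih₁
      obtain ⟨σ₂, h₂'⟩ := ih₂
      exact ⟨σ₁.trans σ₂, fun i => (h₁' i).trans (h₂' _)⟩

noncomputable def pList (m : ℕ) (lam : Multiset ℕ) : List ℕ :=
  lam.toList ++ List.replicate (m - Multiset.card lam) 0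

noncomputable def S (m : ℕ) (lam : Multiset ℕ) : Finset (Fin m → ℕ) :=
  Finset.image
    (fun σ : Equiv.Perm (Fin m) => fun i : Fin m => (pList m lam).getD (σ i : ℕ) 0)
    Finset.univ

noncomputable def mono {m : ℕ} (α : Fin m → ℕ) : (Fin m → ℝ) → ℝ := fun y => ∏ i, y i ^ α i

lemma msymm_eq (m : ℕ) (lam : Multiset ℕ) (y : Fin m → ℝ) :
    msymm m lam y = ∑ α ∈ S m lam, mono α y := rfl

lemma pList_length {m : ℕ} {lam : Multiset ℕ} (h : Multiset.card lam ≤ m) :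
    (pList m lam).length = m := by
  simp [pList]; omega

lemma pList_coe (m : ℕ) (lam : Multiset ℕ) :
    (pList m lam : Multiset ℕ) = lam + Multiset.replicate (m - Multiset.card lam) 0 := by
  simp only [pList, ← Multiset.coe_add, Multiset.coe_toList, Multiset.coe_replicate]

lemma ofFn_getcast {m : ℕ} (p : List ℕ) (hlen : p.length = m) :
    List.ofFn (fun i : Fin m => p.get (Fin.cast hlen.symm i)) = p := by
  rw [← List.ofFn_congr hlen p.get, List.ofFn_get]

lemma mem_S {m : ℕ} {lam : Multiset ℕ} (h : Multiset.card lam ≤ m) (α : Fin m → ℕ) :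
    α ∈ S m lam ↔
      (List.ofFn α : Multiset ℕ) = lam + Multiset.replicate (m - Multiset.card lam) 0 := by
  rw [← pList_coe, Multiset.coe_eq_coe]
  set p := pList m lam with hp
  have hlen : p.length = m := pList_length h
  set g : Fin m → ℕ := fun i : Fin m => p.get (Fin.cast hlen.symm i) with hg
  have hofg : List.ofFn g = p := ofFn_getcast p hlen
  constructor
  · rintro hα
    simp only [S, Finset.mem_image, Finset.mem_univ, true_and] at hα
    obtain ⟨σ, rfl⟩ := hα
    have h1 : (fun i : Fin m => p.getD (σ i : ℕ) 0) = g ∘ σ := by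
      funext i
      rw [Function.comp_apply, hg, List.getD_eq_getElem p 0 (by rw [hlen]; exact (σ i).isLt)]
      rfl
    rw [h1, ← hofg]
    exact Equiv.Perm.ofFn_comp_perm σ g
  · intro hperm
    obtain ⟨σ0, hσ0⟩ := perm_exists_fin_equiv hperm
    have hlen' : (List.ofFn α).length = m := by simp
    refine Finset.mem_image.2 ⟨(finCongr hlen'.symm).trans (σ0.trans (finCongr hlen)), Finset.mem_univ _, ?_⟩
    funext i
    have h2 := hσ0 (Fin.cast hlen'.symm i)
    rw [List.get_ofFn] at h2
    simp only [Equiv.trans_apply, finCongr_apply]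
    rw [List.getD_eq_getElem p 0 (by exact (σ0 (Fin.cast hlen'.symm i)).isLt)]
    have h3 : p[(Fin.cast hlen (σ0 (Fin.cast hlen'.symm i)) : ℕ)] = p.get (σ0 (Fin.cast hlen'.symm i)) := rfl
    rw [h3, ← h2]
    simp

lemma mono_update {m : ℕ} (α : Fin m → ℕ) (y : Fin m → ℝ) (i : Fin m) (s : ℝ) :
    mono α (Function.update y i s) = s ^ α i * ∏ j ∈ Finset.univ.erase i, y j ^ α j := by
  rw [mono, ← Finset.mul_prod_erase _ _ (Finset.mem_univ i)]
  congr 1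
  · rw [Function.update_self]
  · exact Finset.prod_congr rfl fun j hj => by
      rw [Function.update_of_ne (Finset.ne_of_mem_erase hj)]

lemma mono_self_erase {m : ℕ} (α : Fin m → ℕ) (y : Fin m → ℝ) (i : Fin m) (n : ℕ) :
    mono (Function.update α i n) y = y i ^ n * ∏ j ∈ Finset.univ.erase i, y j ^ α j := by
  rw [mono, ← Finset.mul_prod_erase _ _ (Finset.mem_univ i), Function.update_self]
  congr 1
  exact Finset.prod_congr rfl fun j hj => by
    rw [Function.update_of_ne (Finset.ne_of_mem_erase hj)]

lemma pd_sum_mono {ι : Type*} {m : ℕ} (A : Finset ι) (c : ι → ℝ) (e : ι → Fin m → ℕ) (i : Fin m) :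
    pd i (fun y => ∑ a ∈ A, c a * mono (e a) y)
      = fun y => ∑ a ∈ A, (c a * (e a i : ℝ)) * mono (Function.update (e a) i (e a i - 1)) y := by
  funext y
  rw [pd]
  have h1 : (fun s => ∑ a ∈ A, c a * mono (e a) (Function.update y i s))
      = fun s => ∑ a ∈ A, c a * (s ^ e a i * ∏ j ∈ Finset.univ.erase i, y j ^ e a j) := by
    funext s; exact Finset.sum_congr rfl fun a _ => by rw [mono_update]
  rw [h1, deriv_fun_sum (fun a _ => by fun_prop)]
  refine Finset.sum_congr rfl fun a _ => ?_
  rw [mono_self_erase]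
  have h2 : (fun s : ℝ => c a * (s ^ e a i * ∏ j ∈ Finset.univ.erase i, y j ^ e a j))
      = fun s : ℝ => (c a * ∏ j ∈ Finset.univ.erase i, y j ^ e a j) * s ^ e a i := by
    funext s; ring
  rw [h2, deriv_const_mul_field, deriv_pow_field]
  ring

lemma pd_iter_sum_mono {ι : Type*} {m : ℕ} (A : Finset ι) (c : ι → ℝ) (e : ι → Fin m → ℕ)
    (i : Fin m) (t : ℕ) :
    (pd i)^[t] (fun y => ∑ a ∈ A, c a * mono (e a) y)
      = fun y => ∑ a ∈ A, (c a * ((e a i).descFactorial t : ℝ))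
          * mono (Function.update (e a) i (e a i - t)) y := by
  induction t with
  | zero =>
      simp only [Function.iterate_zero, id_eq, Nat.descFactorial_zero, Nat.cast_one, mul_one,
        Nat.sub_zero]
      congr 1
      funext y
      exact Finset.sum_congr rfl fun a _ => by rw [Function.update_eq_self]
  | succ t ih =>
      rw [Function.iterate_succ', Function.comp_apply, ih, pd_sum_mono]
      funext y
      refine Finset.sum_congr rfl fun a _ => ?_
      rw [Function.update_idem, Function.update_self]
      have h3 : e a i - t - 1 = e a i - (t + 1) := by omega
      rw [h3, Nat.descFactorial_succ]
      push_cast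
      ring

lemma fold_pd_sum_mono {ι : Type*} {m t : ℕ} (L : List (Fin m)) (hL : L.Nodup)
    (A : Finset ι) (c : ι → ℝ) (e : ι → Fin m → ℕ) :
    L.foldr (fun i g => (pd i)^[t] ∘ g) id (fun y => ∑ a ∈ A, c a * mono (e a) y)
      = fun y => ∑ a ∈ A,
          (c a * ((L.map (fun i => ((e a i).descFactorial t : ℝ))).prod))
          * mono (fun j => if j ∈ L then e a j - t else e a j) y := by
  induction L with
  | nil => simp [List.foldr]
  | cons i L ih =>
      have hi : i ∉ L := (List.nodup_cons.1 hL).1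
      have hL' : L.Nodup := (List.nodup_cons.1 hL).2
      rw [List.foldr_cons, Function.comp_apply, ih hL', pd_iter_sum_mono]
      funext y
      refine Finset.sum_congr rfl fun a _ => ?_
      rw [if_neg hi]
      congr 1
      · rw [List.map_cons, List.prod_cons]; ring
      · congr 1
        funext j
        by_cases hj : j = i
        · subst hj
          simp [Function.update_self, hi]
        · rw [Function.update_of_ne hj]
          by_cases hjL : j ∈ L <;> simp [hjL, hj, List.mem_cons]

lemma prod_split {m l : ℕ} (hl : l ≤ m) (F : Fin m → ℝ) :
    ∏ j, F j = (∏ i : Fin l, F (Fin.castLE hl i))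
      * ∏ j : Fin (m - l), F ⟨l + (j : ℕ), by have := j.isLt; omega⟩ := by
  set G : ℕ → ℝ := fun j => if h : j < m then F ⟨j, h⟩ else 1 with hG
  have h1 : ∏ j : Fin m, F j = ∏ j ∈ Finset.range m, G j := by
    rw [← Fin.prod_univ_eq_prod_range G m]
    exact Finset.prod_congr rfl fun j _ => by rw [hG]; simp
  have hm : m = l + (m - l) := by omega
  have h2 : ∏ j ∈ Finset.range m, G j = ∏ j ∈ Finset.range (l + (m - l)), G j := by rw [← hm]
  rw [h1, h2, Finset.prod_range_add]
  congr 1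
  · rw [← Fin.prod_univ_eq_prod_range G l]
    refine Finset.prod_congr rfl fun i _ => ?_
    have : (i : ℕ) < m := lt_of_lt_of_le i.isLt hl
    exact dif_pos this
  · rw [← Fin.prod_univ_eq_prod_range (fun j => G (l + j)) (m - l)]
    refine Finset.prod_congr rfl fun j _ => ?_
    have : l + (j : ℕ) < m := by have := j.isLt; omega
    exact dif_pos this

lemma ofFn_split {m l : ℕ} (hl : l ≤ m) (α : Fin m → ℕ) :
    (List.ofFn α : Multiset ℕ)
      = (List.ofFn (fun i : Fin l => α (Fin.castLE hl i)) : Multiset ℕ)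
        + (List.ofFn (fun j : Fin (m - l) => α ⟨l + (j : ℕ), by have := j.isLt; omega⟩)
            : Multiset ℕ) := by
  have hm : m = l + (m - l) := by omega
  rw [List.ofFn_congr hm α, List.ofFn_add, ← Multiset.coe_add]
  have e1 : (fun i : Fin l => α (Fin.cast hm.symm (Fin.castLE (Nat.le_add_right l (m - l)) i)))
      = fun i : Fin l => α (Fin.castLE hl i) := by
    funext i; exact congrArg α (Fin.ext rfl)
  have e2 : (fun j : Fin (m - l) => α (Fin.cast hm.symm (Fin.natAdd l j)))
      = fun j : Fin (m - l) => α ⟨l + (j : ℕ), by have := j.isLt; omega⟩ := by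
    funext j; exact congrArg α (Fin.ext rfl)
  rw [e1, e2]

def joinFn {m l : ℕ} (hl : l ≤ m) (β : Fin l → ℕ) (γ : Fin (m - l) → ℕ) : Fin m → ℕ :=
  fun j => if h : (j : ℕ) < l then β ⟨j, h⟩
    else γ ⟨(j : ℕ) - l, by have := j.isLt; omega⟩
lemma mono_join {m l : ℕ} (hl : l ≤ m) (β : Fin l → ℕ) (γ : Fin (m - l) → ℕ) (y : Fin m → ℝ) :
    mono β (fun i => y (Fin.castLE hl i))
      * mono γ (fun j => y ⟨l + (j : ℕ), by have := j.isLt; omega⟩)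
      = mono (joinFn hl β γ) y := by
  rw [mono, mono, mono, prod_split hl (fun j => y j ^ joinFn hl β γ j)]
  congr 1
  · refine Finset.prod_congr rfl fun i _ => ?_
    congr 1
    have h : ((Fin.castLE hl i : Fin m) : ℕ) < l := i.isLt
    rw [joinFn, dif_pos h]
    exact congrArg β (Fin.ext rfl)
  · refine Finset.prod_congr rfl fun j _ => ?_
    congr 1
    have h : ¬ ((⟨l + (j : ℕ), by have := j.isLt; omega⟩ : Fin m) : ℕ) < l := by simp
    rw [joinFn, dif_neg h]
    exact congrArg γ (Fin.ext (by simp))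

lemma coeff_eq {t : ℕ} {κ : Multiset ℕ} (hκ : ∀ x ∈ κ, t ≤ x) :
    ((κ.map Nat.factorial).prod : ℝ) / ((κ.map (fun x => Nat.factorial (x - t))).prod : ℝ)
      = (((κ.map (fun x => x.descFactorial t)).prod : ℕ) : ℝ) := by
  have h1 : κ.map Nat.factorial
      = κ.map (fun x => x.descFactorial t * Nat.factorial (x - t)) := by
    refine Multiset.map_congr rfl fun x hx => ?_
    rw [← Nat.factorial_mul_descFactorial (hκ x hx), mul_comm]
  have hne : ((κ.map (fun x => Nat.factorial (x - t))).prod : ℝ) ≠ 0 := by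
    rw [Nat.cast_ne_zero]
    refine Multiset.prod_ne_zero ?_
    simp only [Multiset.mem_map]
    rintro ⟨x, -, hx⟩
    exact (Nat.factorial_ne_zero _) hx
  rw [h1, Multiset.prod_map_mul]
  push_cast
  rw [mul_div_assoc, div_self (by push_cast at hne ⊢; exact hne), mul_one]

lemma multiset_le_of_le_add_rep {κ lam : Multiset ℕ} {k : ℕ}
    (h : κ ≤ lam + Multiset.replicate k 0) (h0 : 0 ∉ κ) : κ ≤ lam := by
  rw [Multiset.le_iff_count] at h ⊢
  intro x
  have hx := h x
  rcases eq_or_ne x 0 with rfl | hx0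
  · rw [Multiset.count_eq_zero_of_notMem h0]; omega
  · rwa [Multiset.count_add, Multiset.count_replicate, if_neg (Ne.symm hx0), add_zero] at hx

lemma multiset_add_sub_rep {κ lam R : Multiset ℕ} (h : κ ≤ lam) :
    lam + R - κ = (lam - κ) + R := by
  ext x
  have := Multiset.le_iff_count.1 h x
  simp only [Multiset.count_sub, Multiset.count_add]
  omega

theorem stmt11 (m l t : ℕ) (ht : 1 ≤ t) (hl : l ≤ m)
    (lam : Multiset ℕ) (hcard : Multiset.card lam ≤ m)
    (hcontain : l ≤ Multiset.card (lam.filter (fun x => t ≤ x))) :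
    ((List.finRange l).foldr (fun i g => (pd (Fin.castLE hl i))^[t] ∘ g) id) (msymm m lam)
      = fun y : Fin m → ℝ =>
        ∑ κ ∈ (Multiset.toFinset lam.powerset).filter
            (fun κ => Multiset.card κ = l ∧ ∀ x ∈ κ, t ≤ x),
          (((κ.map Nat.factorial).prod : ℝ)
              / ((κ.map (fun x => Nat.factorial (x - t))).prod : ℝ))
            * msymm l (κ.map (fun x => x - t)) (fun i => y (Fin.castLE hl i))
            * msymm (m - l) (lam - κ)
                (fun j => y ⟨l + (j : ℕ), by have := j.isLt; omega⟩) := by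
  classical
  set L : List (Fin m) := (List.finRange l).map (Fin.castLE hl) with hLdef
  have hLnodup : L.Nodup := (List.nodup_finRange l).map (Fin.castLE_injective hl)
  have hmemL : ∀ j : Fin m, j ∈ L ↔ (j : ℕ) < l := by
    intro j
    constructor
    · intro hj
      obtain ⟨i, -, rfl⟩ := List.mem_map.1 hj
      exact i.isLt
    · intro hj
      exact List.mem_map.2 ⟨⟨(j : ℕ), hj⟩, List.mem_finRange _, Fin.ext rfl⟩
  have h0 : ((List.finRange l).foldr (fun i g => (pd (Fin.castLE hl i))^[t] ∘ g) id)
        (msymm m lam)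
      = L.foldr (fun i g => (pd i)^[t] ∘ g) id (msymm m lam) := by
    rw [hLdef, List.foldr_map]
  have hmsymmfun : msymm m lam
      = fun y => ∑ α ∈ S m lam, (fun _ : Fin m → ℕ => (1 : ℝ)) α * mono (id α) y := by
    funext y
    rw [msymm_eq]
    simp
  rw [h0, hmsymmfun, fold_pd_sum_mono L hLnodup (S m lam) (fun _ => (1 : ℝ)) id]
  simp only [id_eq, one_mul]
  funext y
  -- abbreviations
  set K := (Multiset.toFinset lam.powerset).filter
      (fun κ => Multiset.card κ = l ∧ ∀ x ∈ κ, t ≤ x) with hK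
  -- RHS to sigma sum
  have hRHS : (∑ κ ∈ K,
        (((κ.map Nat.factorial).prod : ℝ) / ((κ.map (fun x => Nat.factorial (x - t))).prod : ℝ))
          * msymm l (κ.map (fun x => x - t)) (fun i => y (Fin.castLE hl i))
          * msymm (m - l) (lam - κ)
              (fun j => y ⟨l + (j : ℕ), by have := j.isLt; omega⟩))
      = ∑ p ∈ K.sigma (fun κ => (S l (κ.map (fun x => x - t))) ×ˢ (S (m - l) (lam - κ))),
          (((p.1.map Nat.factorial).prod : ℝ)
              / ((p.1.map (fun x => Nat.factorial (x - t))).prod : ℝ))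
            * mono (joinFn hl p.2.1 p.2.2) y := by
    rw [Finset.sum_sigma]
    refine Finset.sum_congr rfl fun κ hκ => ?_
    rw [Finset.sum_product, msymm_eq, msymm_eq, mul_assoc, Finset.sum_mul_sum,
      Finset.mul_sum]
    refine Finset.sum_congr rfl fun β _ => ?_
    rw [Finset.mul_sum]
    refine Finset.sum_congr rfl fun γ _ => ?_
    rw [mono_join hl β γ y]
  rw [hRHS]
  -- LHS: restrict to good α
  have hfilter : (∑ α ∈ S m lam,
        ((L.map (fun i => ((α i).descFactorial t : ℝ))).prod)
          * mono (fun j => if j ∈ L then α j - t else α j) y)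
      = ∑ α ∈ (S m lam).filter (fun α => ∀ i : Fin l, t ≤ α (Fin.castLE hl i)),
        ((L.map (fun i => ((α i).descFactorial t : ℝ))).prod)
          * mono (fun j => if j ∈ L then α j - t else α j) y := by
    refine (Finset.sum_filter_of_ne ?_).symm
    intro α hα hne
    by_contra hbad
    push_neg at hbad
    obtain ⟨i, hi⟩ := hbad
    apply hne
    have hz : (0 : ℝ) ∈ L.map (fun i => ((α i).descFactorial t : ℝ)) := by
      refine List.mem_map.2 ⟨Fin.castLE hl i, (hmemL _).2 i.isLt, ?_⟩
      rw [Nat.cast_eq_zero]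
      exact Nat.descFactorial_eq_zero_iff_lt.2 (by omega)
    rw [List.prod_eq_zero hz, zero_mul]
  rw [hfilter]
  -- the bijection
  refine Finset.sum_nbij'
    (fun α => ⟨(List.ofFn (fun i : Fin l => α (Fin.castLE hl i)) : Multiset ℕ),
      (fun i => α (Fin.castLE hl i) - t,
       fun j => α ⟨l + (j : ℕ), by have := j.isLt; omega⟩)⟩)
    (fun p => joinFn hl (fun i => p.2.1 i + t) p.2.2)
    ?_ ?_ ?_ ?_ ?_
  · -- hi : maps into sigma
    intro α hα
    rw [Finset.mem_filter] at hα
    obtain ⟨hαS, hgood⟩ := hα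
    rw [mem_S hcard] at hαS
    set κ : Multiset ℕ := (List.ofFn (fun i : Fin l => α (Fin.castLE hl i)) : Multiset ℕ)
      with hκdef
    have hκcard : Multiset.card κ = l := by simp [hκdef]
    have hκt : ∀ x ∈ κ, t ≤ x := by
      intro x hx
      rw [hκdef, Multiset.mem_coe, List.mem_ofFn] at hx
      obtain ⟨i, rfl⟩ := hx
      exact hgood i
    have hsplit := ofFn_split hl α
    have hκle : κ ≤ lam := by
      refine multiset_le_of_le_add_rep (k := m - Multiset.card lam) ?_ ?_
      · rw [← hαS, hsplit, ← hκdef]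
        exact Multiset.le_add_right _ _
      · intro h0
        have := hκt 0 h0
        omega
    have hllam : l ≤ Multiset.card lam := hκcard ▸ Multiset.card_le_card hκle
    have hκK : κ ∈ K := by
      rw [hK, Finset.mem_filter]
      exact ⟨Multiset.mem_toFinset.2 (Multiset.mem_powerset.2 hκle), hκcard, hκt⟩
    refine Finset.mem_sigma.2 ⟨hκK, Finset.mem_product.2 ⟨?_, ?_⟩⟩
    · -- β part
      have hcm : Multiset.card (κ.map (fun x => x - t)) = l := by
        rw [Multiset.card_map, hκcard]
      rw [mem_S (le_of_eq hcm), hcm, Nat.sub_self, Multiset.replicate_zero, add_zero]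
      rw [hκdef, Multiset.map_coe, List.map_ofFn]
      rfl
    · -- γ part
      have hsub : Multiset.card (lam - κ) = Multiset.card lam - l := by
        rw [Multiset.card_sub hκle, hκcard]
      rw [mem_S (by rw [hsub]; omega)]
      have hγ : (List.ofFn (fun j : Fin (m - l) =>
            α ⟨l + (j : ℕ), by have := j.isLt; omega⟩) : Multiset ℕ)
          = lam + Multiset.replicate (m - Multiset.card lam) 0 - κ := by
        rw [← hαS, hsplit, ← hκdef]
        exact (add_tsub_cancel_left _ _).symm
      rw [hγ, multiset_add_sub_rep hκle, hsub]
      congr 2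
      omega
  · -- hj : maps into filter
    rintro ⟨κ, β, γ⟩ hp
    rw [Finset.mem_sigma, Finset.mem_product] at hp
    obtain ⟨hκK, hβ, hγ⟩ := hp
    rw [hK, Finset.mem_filter] at hκK
    obtain ⟨hκpow, hκcard, hκt⟩ := hκK
    have hκle : κ ≤ lam := Multiset.mem_powerset.1 (Multiset.mem_toFinset.1 hκpow)
    have hllam : l ≤ Multiset.card lam := hκcard ▸ Multiset.card_le_card hκle
    have hcm : Multiset.card (κ.map (fun x => x - t)) = l := by
      rw [Multiset.card_map, hκcard]
    rw [mem_S (le_of_eq hcm), hcm, Nat.sub_self, Multiset.replicate_zero, add_zero] at hβ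
    have hsub : Multiset.card (lam - κ) = Multiset.card lam - l := by
      rw [Multiset.card_sub hκle, hκcard]
    rw [mem_S (by rw [hsub]; omega)] at hγ
    have hβt : (List.ofFn (fun i : Fin l => β i + t) : Multiset ℕ) = κ := by
      have : List.ofFn (fun i : Fin l => β i + t)
          = List.map (fun x => x + t) (List.ofFn β) := by
        rw [List.map_ofFn]; rfl
      rw [this, ← Multiset.map_coe, hβ, Multiset.map_map]
      calc Multiset.map ((fun x => x + t) ∘ fun x => x - t) κ
          = Multiset.map id κ := Multiset.map_congr rfl fun x hx => by
            simp [Nat.sub_add_cancel (hκt x hx)]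
        _ = κ := Multiset.map_id κ
    have hgood : ∀ i : Fin l, t ≤ joinFn hl (fun i => β i + t) γ (Fin.castLE hl i) := by
      intro i
      rw [joinFn, dif_pos (show ((Fin.castLE hl i : Fin m) : ℕ) < l from i.isLt)]
      omega
    rw [Finset.mem_filter]
    refine ⟨?_, hgood⟩
    rw [mem_S hcard, ofFn_split hl]
    have e1 : (fun i : Fin l => joinFn hl (fun i => β i + t) γ (Fin.castLE hl i))
        = fun i : Fin l => β i + t := by
      funext i
      rw [joinFn, dif_pos (show ((Fin.castLE hl i : Fin m) : ℕ) < l from i.isLt)]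
      exact congrArg (· + t) (congrArg β (Fin.ext rfl))
    have e2 : (fun j : Fin (m - l) => joinFn hl (fun i => β i + t) γ
          ⟨l + (j : ℕ), by have := j.isLt; omega⟩)
        = γ := by
      funext j
      rw [joinFn, dif_neg (by simp)]
      exact congrArg γ (Fin.ext (by simp))
    rw [e1, e2, hβt, hγ, ← add_assoc]
    have : κ + (lam - κ) = lam := by
      rw [add_comm]; exact tsub_add_cancel_of_le hκle
    rw [this, hsub]
    congr 2
    omega
  · -- left inverse
    intro α hα
    rw [Finset.mem_filter] at hα
    obtain ⟨-, hgood⟩ := hα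
    funext j
    simp only [joinFn]
    by_cases h : (j : ℕ) < l
    · rw [dif_pos h]
      have h1 : Fin.castLE hl ⟨(j : ℕ), h⟩ = j := Fin.ext rfl
      rw [h1]
      exact Nat.sub_add_cancel (h1 ▸ hgood ⟨(j : ℕ), h⟩)
    · rw [dif_neg h]
      exact congrArg α (Fin.ext (by simp; omega))
  · -- right inverse
    rintro ⟨κ, β, γ⟩ hp
    rw [Finset.mem_sigma, Finset.mem_product] at hp
    obtain ⟨hκK, hβ, hγ⟩ := hp
    have e1 : (fun i : Fin l =>
          joinFn hl (fun i => β i + t) γ (Fin.castLE hl i)) = fun i : Fin l => β i + t := by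
      funext i
      rw [joinFn, dif_pos (show ((Fin.castLE hl i : Fin m) : ℕ) < l from i.isLt)]
      exact congrArg (· + t) (congrArg β (Fin.ext rfl))
    have e2 : (fun j : Fin (m - l) => joinFn hl (fun i => β i + t) γ
          ⟨l + (j : ℕ), by have := j.isLt; omega⟩) = γ := by
      funext j
      rw [joinFn, dif_neg (by simp)]
      exact congrArg γ (Fin.ext (by simp))
    -- need hβt : ofFn (β + t) = κ  (requires facts about κ, β)
    rw [hK, Finset.mem_filter] at hκK
    obtain ⟨hκpow, hκcard, hκt⟩ := hκK
    have hcm : Multiset.card (κ.map (fun x => x - t)) = l := by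
      rw [Multiset.card_map, hκcard]
    rw [mem_S (le_of_eq hcm), hcm, Nat.sub_self, Multiset.replicate_zero, add_zero] at hβ
    have hβt : (List.ofFn (fun i : Fin l => β i + t) : Multiset ℕ) = κ := by
      have : List.ofFn (fun i : Fin l => β i + t)
          = List.map (fun x => x + t) (List.ofFn β) := by
        rw [List.map_ofFn]; rfl
      rw [this, ← Multiset.map_coe, hβ, Multiset.map_map]
      calc Multiset.map ((fun x => x + t) ∘ fun x => x - t) κ
          = Multiset.map id κ := Multiset.map_congr rfl fun x hx => by
            simp [Nat.sub_add_cancel (hκt x hx)]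
        _ = κ := Multiset.map_id κ
    have h2 : (fun i : Fin l =>
          joinFn hl (fun i => β i + t) γ (Fin.castLE hl i) - t) = β := by
      funext i
      rw [congrFun e1 i]
      omega
    have h1 : (List.ofFn (fun i : Fin l =>
          joinFn hl (fun i => β i + t) γ (Fin.castLE hl i)) : Multiset ℕ) = κ := by
      rw [e1]; exact hβt
    refine Sigma.ext h1 (heq_of_eq ?_)
    exact Prod.ext h2 e2
  · -- values agree
    intro α hα
    rw [Finset.mem_filter] at hα
    obtain ⟨hαS, hgood⟩ := hα
    set κ : Multiset ℕ := (List.ofFn (fun i : Fin l => α (Fin.castLE hl i)) : Multiset ℕ)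
      with hκdef
    have hκt : ∀ x ∈ κ, t ≤ x := by
      intro x hx
      rw [hκdef, Multiset.mem_coe, List.mem_ofFn] at hx
      obtain ⟨i, rfl⟩ := hx
      exact hgood i
    have hcoeff : ((L.map (fun i => ((α i).descFactorial t : ℝ))).prod)
        = ((κ.map Nat.factorial).prod : ℝ)
            / ((κ.map (fun x => Nat.factorial (x - t))).prod : ℝ) := by
      rw [coeff_eq hκt, hκdef, Multiset.map_coe, List.map_ofFn, Multiset.prod_coe,
        Nat.cast_list_prod, List.map_ofFn, hLdef, List.map_map, List.ofFn_eq_map]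
      rfl
    have hexp : (fun j => if j ∈ L then α j - t else α j)
        = joinFn hl (fun i => α (Fin.castLE hl i) - t)
            (fun j => α ⟨l + (j : ℕ), by have := j.isLt; omega⟩) := by
      funext j
      rw [joinFn]
      by_cases h : (j : ℕ) < l
      · rw [dif_pos h, if_pos ((hmemL j).2 h)]
        exact congrArg (· - t) (congrArg α (Fin.ext rfl))
      · rw [dif_neg h, if_neg (fun hj => h ((hmemL j).1 hj))]
        exact congrArg α (Fin.ext (by simp; omega))
    rw [hcoeff, hexp]
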